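/- arXiv:2005.01378 — 2 statements merged into one kernel-verified Lean document; each statement's English description precedes it below -/
import Mathlib

section
/- Let K ⊆ ℝ^n be a nonempty closed convex set, β > 0, B ≥ 0, and let f : ℝ^n → ℝ be differentiable with ‖∇f(x) − ∇f(y)‖₂ ≤ β‖x − y‖₂ for all x, y ∈ K and 0 ≤ f(x) ≤ B for all x ∈ K. Set η = 1/β and, starting from any x₀ ∈ K, define x_{τ+1} = P_K(x_τ − η∇f(x_τ)), where P_K is the Euclidean projection onto K. Then for every positive integer T: min_{0≤τ<T} (1/η)·‖P_K(x_τ − η∇f(x_τ)) − x_τ‖₂ ≤ √(2βB/T). -/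
open Matrix Finset RealInnerProductSpace

/-- Euclidean (ℓ²) norm of a vector in `Fin n → ℝ`. -/
noncomputable def vnorm {n : ℕ} (v : Fin n → ℝ) : ℝ := Real.sqrt (∑ i, v i ^ 2)

/-- Spectral norm (ℓ²-operator norm) of a matrix. -/
noncomputable def specNorm {m n : ℕ} (A : Matrix (Fin m) (Fin n) ℝ) : ℝ :=
  ‖LinearMap.toContinuousLinearMap (Matrix.toEuclideanLin A)‖

/-- Largest eigenvalue of a symmetric matrix, as the supremum of the Rayleigh quotient
over the unit sphere. -/
noncomputable def lambdaMax {n : ℕ} (A : Matrix (Fin n) (Fin n) ℝ) : ℝ :=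
  sSup {r | ∃ v : Fin n → ℝ, vnorm v = 1 ∧ r = v ⬝ᵥ A.mulVec v}

/-- Weighted empirical mean `μ_w = X w`. -/
noncomputable def muW {d N : ℕ} (X : Matrix (Fin d) (Fin N) ℝ) (w : Fin N → ℝ) : Fin d → ℝ :=
  X.mulVec w

/-- Weighted empirical covariance `Σ_w = ∑ i, w_i (X_i - μ_w)(X_i - μ_w)ᵀ`. -/
noncomputable def covW {d N : ℕ} (X : Matrix (Fin d) (Fin N) ℝ) (w : Fin N → ℝ) :
    Matrix (Fin d) (Fin d) ℝ :=
  ∑ i : Fin N, w i • Matrix.vecMulVec (Xᵀ i - X.mulVec w) (Xᵀ i - X.mulVec w)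

/-- The constraint set `Δ_{N,ε}`. -/
def deltaSet (N : ℕ) (ε : ℝ) : Set (Fin N → ℝ) :=
  {w | (∑ i, w i) = 1 ∧ ∀ i, 0 ≤ w i ∧ w i ≤ 1 / ((1 - ε) * N)}

/-- Gradient in `w` of `F(w,u) = uᵀ Σ_w u`: the `i`-th coordinate is
`(X_iᵀu)² − 2(uᵀXw)(X_iᵀu)`. -/
noncomputable def gradFw {d N : ℕ} (X : Matrix (Fin d) (Fin N) ℝ) (w : Fin N → ℝ)
    (u : Fin d → ℝ) : Fin N → ℝ :=
  fun i => (Xᵀ i ⬝ᵥ u) ^ 2 - 2 * (u ⬝ᵥ X.mulVec w) * (Xᵀ i ⬝ᵥ u)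

/-- The matrix `Y = exp(ρ Σ_w) / tr(exp(ρ Σ_w))`. -/
noncomputable def ymat {d N : ℕ} (X : Matrix (Fin d) (Fin N) ℝ) (ρ : ℝ) (w : Fin N → ℝ) :
    Matrix (Fin d) (Fin d) ℝ :=
  ((NormedSpace.exp (ρ • covW X w)).trace)⁻¹ • NormedSpace.exp (ρ • covW X w)

/-- The softmax objective `f(w) = (1/ρ) ln tr exp(ρ Σ_w)`. -/
noncomputable def smaxObj {d N : ℕ} (X : Matrix (Fin d) (Fin N) ℝ) (ρ : ℝ) (w : Fin N → ℝ) : ℝ :=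
  (1 / ρ) * Real.log (NormedSpace.exp (ρ • covW X w)).trace

/-- Gradient of the softmax objective: `∇f(w)_i = X_iᵀ Y X_i − 2 X_iᵀ Y μ_w`. -/
noncomputable def gradSmax {d N : ℕ} (X : Matrix (Fin d) (Fin N) ℝ) (ρ : ℝ) (w : Fin N → ℝ) :
    Fin N → ℝ :=
  fun i => Xᵀ i ⬝ᵥ (ymat X ρ w).mulVec (Xᵀ i) - 2 * (Xᵀ i ⬝ᵥ (ymat X ρ w).mulVec (muW X w))

/-- Matrix logarithm of a symmetric matrix, via the spectral theorem (junk value `0` on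
non-Hermitian input). -/
noncomputable def matLog {n : ℕ} (Y : Matrix (Fin n) (Fin n) ℝ) : Matrix (Fin n) (Fin n) ℝ :=
  if h : Y.IsHermitian then h.cfc Real.log else 0

/-- descent bound for projected gradient descent on a smooth bounded
objective over a closed convex set. -/
theorem stmt_18 {n : ℕ} (K : Set (EuclideanSpace ℝ (Fin n)))
    (hKne : K.Nonempty) (hKcl : IsClosed K) (hKconv : Convex ℝ K)
    (β B : ℝ) (hβ : 0 < β) (hB : 0 ≤ B)
    (f : EuclideanSpace ℝ (Fin n) → ℝ) (g : EuclideanSpace ℝ (Fin n) → EuclideanSpace ℝ (Fin n))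
    (hdiff : ∀ x, HasGradientAt f (g x) x)
    (hsmooth : ∀ x ∈ K, ∀ y ∈ K, ‖g x - g y‖ ≤ β * ‖x - y‖)
    (hrange : ∀ x ∈ K, 0 ≤ f x ∧ f x ≤ B)
    (η : ℝ) (hη : η = 1 / β)
    (proj : EuclideanSpace ℝ (Fin n) → EuclideanSpace ℝ (Fin n))
    (hproj : ∀ y, proj y ∈ K ∧ ∀ z ∈ K, ‖proj y - y‖ ≤ ‖z - y‖)
    (x : ℕ → EuclideanSpace ℝ (Fin n)) (hx0 : x 0 ∈ K)
    (hiter : ∀ τ, x (τ + 1) = proj (x τ - η • g (x τ)))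
    (T : ℕ) (hT : 0 < T) :
    ∃ τ < T, (1 / η) * ‖proj (x τ - η • g (x τ)) - x τ‖ ≤ Real.sqrt (2 * β * B / T) := by

  have hηpos : 0 < η := by rw [hη]; positivity
  have hβη : 1 / η = β := by rw [hη, one_div_one_div]
  -- all iterates stay in K
  have hxK : ∀ τ, x τ ∈ K := by
    intro τ
    induction τ with
    | zero => exact hx0
    | succ k _ => rw [hiter k]; exact (hproj _).1
  -- descent lemma: quadratic upper bound from β-Lipschitz gradient on K
  have descent : ∀ a ∈ K, ∀ b ∈ K,
      f b ≤ f a + ⟪g a, b - a⟫ + β / 2 * ‖b - a‖ ^ 2 := by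
    intro a ha b hb
    set v := b - a with hv
    have hseg : ∀ t ∈ Set.Icc (0:ℝ) 1, a + t • v ∈ K := by
      intro t ht
      have h := hKconv ha hb (by linarith [ht.2] : (0:ℝ) ≤ 1 - t) ht.1 (by ring)
      convert h using 1
      simp only [hv]
      module
    have hφ : ∀ t : ℝ, HasDerivAt (fun s => f (a + s • v)) ⟪g (a + t • v), v⟫ t := by
      intro t
      have h1 : HasDerivAt (fun s : ℝ => a + s • v) v t := by
        simpa using ((hasDerivAt_id t).smul_const v).const_add a
      have h2 := (hdiff (a + t • v)).hasFDerivAt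
      have h3 := h2.comp_hasDerivAt t h1
      simpa [InnerProductSpace.toDual_apply_apply, Function.comp_def] using h3
    have hgc : ContinuousOn (fun t : ℝ => ⟪g (a + t • v), v⟫) (Set.Icc 0 1) := by
      have hlip : LipschitzOnWith (Real.toNNReal (β * ‖v‖ * ‖v‖))
          (fun t : ℝ => ⟪g (a + t • v), v⟫) (Set.Icc 0 1) := by
        rw [lipschitzOnWith_iff_dist_le_mul]
        intro s hs t ht
        have h1 := hsmooth _ (hseg s hs) _ (hseg t ht)
        have h2 : (a + s • v) - (a + t • v) = (s - t) • v := by module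
        rw [h2, norm_smul] at h1
        have h3 : dist ⟪g (a + s • v), v⟫ ⟪g (a + t • v), v⟫
            = |⟪g (a + s • v) - g (a + t • v), v⟫| := by
          rw [Real.dist_eq, ← inner_sub_left]
        rw [h3]
        have h4 : |⟪g (a + s • v) - g (a + t • v), v⟫| ≤ ‖g (a + s • v) - g (a + t • v)‖ * ‖v‖ :=
          abs_real_inner_le_norm _ _
        have h5 : (Real.toNNReal (β * ‖v‖ * ‖v‖) : ℝ) = β * ‖v‖ * ‖v‖ := by
          rw [Real.coe_toNNReal]; positivity
        rw [h5, Real.dist_eq]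
        calc |⟪g (a + s • v) - g (a + t • v), v⟫|
            ≤ ‖g (a + s • v) - g (a + t • v)‖ * ‖v‖ := h4
          _ ≤ (β * (‖s - t‖ * ‖v‖)) * ‖v‖ := by
              apply mul_le_mul_of_nonneg_right h1 (norm_nonneg _)
          _ = β * ‖v‖ * ‖v‖ * |s - t| := by rw [Real.norm_eq_abs]; ring
      exact hlip.continuousOn
    have hint : IntervalIntegrable (fun t : ℝ => ⟪g (a + t • v), v⟫)
        MeasureTheory.volume 0 1 := by
      apply ContinuousOn.intervalIntegrable
      rwa [Set.uIcc_of_le zero_le_one]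
    have hFTC : ∫ t in (0:ℝ)..1, ⟪g (a + t • v), v⟫ = f b - f a := by
      have h := intervalIntegral.integral_eq_sub_of_hasDerivAt
        (f := fun s => f (a + s • v)) (f' := fun t => ⟪g (a + t • v), v⟫)
        (fun t _ => hφ t) hint
      have h1 : a + (1:ℝ) • v = b := by rw [hv]; module
      have h0 : a + (0:ℝ) • v = a := by rw [hv]; module
      simpa only [h1, h0] using h
    have hmono : ∫ t in (0:ℝ)..1, ⟪g (a + t • v), v⟫
        ≤ ∫ t in (0:ℝ)..1, (⟪g a, v⟫ + β * ‖v‖ ^ 2 * t) := by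
      apply intervalIntegral.integral_mono_on zero_le_one hint
      · exact (continuous_const.add (continuous_const.mul continuous_id)).intervalIntegrable _ _
      · intro t ht
        have h0 : a + (0:ℝ) • v = a := by simp
        have h1 := hsmooth _ (hseg t ht) a ha
        have h2 : (a + t • v) - a = t • v := by module
        rw [h2, norm_smul, Real.norm_eq_abs, abs_of_nonneg ht.1] at h1
        have h3 : ⟪g (a + t • v), v⟫ - ⟪g a, v⟫ = ⟪g (a + t • v) - g a, v⟫ :=
          (inner_sub_left _ _ _).symm
        have h4 : ⟪g (a + t • v) - g a, v⟫ ≤ ‖g (a + t • v) - g a‖ * ‖v‖ :=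
          real_inner_le_norm _ _
        have h5 : ‖g (a + t • v) - g a‖ * ‖v‖ ≤ (β * (t * ‖v‖)) * ‖v‖ :=
          mul_le_mul_of_nonneg_right h1 (norm_nonneg _)
        nlinarith [norm_nonneg v]
    have hval : ∫ t in (0:ℝ)..1, (⟪g a, v⟫ + β * ‖v‖ ^ 2 * t)
        = ⟪g a, v⟫ + β / 2 * ‖v‖ ^ 2 := by
      rw [intervalIntegral.integral_add
        ((continuous_const : Continuous fun _ : ℝ => ⟪g a, v⟫).intervalIntegrable _ _)
        ((by fun_prop : Continuous fun t : ℝ => β * ‖v‖ ^ 2 * t).intervalIntegrable _ _)]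
      rw [intervalIntegral.integral_const, intervalIntegral.integral_const_mul,
        integral_id]
      simp only [sub_zero, one_smul, smul_eq_mul, one_mul]
      ring
    rw [hFTC, hval] at hmono
    linarith
  -- variational inequality for the projection
  have hvar : ∀ u z, z ∈ K → ⟪u - proj u, z - proj u⟫ ≤ 0 := by
    intro u z hz
    have hmem := (hproj u).1
    haveI : Nonempty K := ⟨⟨proj u, hmem⟩⟩
    have heq : ‖u - proj u‖ = ⨅ w : K, ‖u - (w : EuclideanSpace ℝ (Fin n))‖ := by
      apply le_antisymm
      · apply le_ciInf
        intro w
        rw [norm_sub_rev u, norm_sub_rev u (w : EuclideanSpace ℝ (Fin n))]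
        exact (hproj u).2 w w.2
      · refine ciInf_le ⟨0, ?_⟩ (⟨proj u, hmem⟩ : K)
        rintro r ⟨w, rfl⟩
        exact norm_nonneg _
    exact (norm_eq_iInf_iff_real_inner_le_zero hKconv hmem).1 heq z hz
  -- per-step decrease
  have hstep : ∀ τ, f (x (τ + 1)) ≤ f (x τ) - β / 2 * ‖x (τ + 1) - x τ‖ ^ 2 := by
    intro τ
    set u := x τ - η • g (x τ) with hu
    have hp : x (τ + 1) = proj u := hiter τ
    set p := proj u with hpdef
    have h1 : ⟪u - p, x τ - p⟫ ≤ 0 := hvar u (x τ) (hxK τ)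
    have h2 : ⟪u - p, x τ - p⟫
        = ⟪x τ - p, x τ - p⟫ - η * ⟪g (x τ), x τ - p⟫ := by
      have : u - p = (x τ - p) - η • g (x τ) := by rw [hu]; module
      rw [this, inner_sub_left, real_inner_smul_left]
    rw [h2, real_inner_self_eq_norm_sq] at h1
    have h3 : ⟪g (x τ), p - x τ⟫ ≤ -((1 / η) * ‖p - x τ‖ ^ 2) := by
      have h4 : ⟪g (x τ), p - x τ⟫ = -⟪g (x τ), x τ - p⟫ := by
        rw [← inner_neg_right]; congr 1; module
      have h5 : ‖x τ - p‖ = ‖p - x τ‖ := norm_sub_rev _ _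
      rw [h5] at h1
      rw [h4]
      have h6 : ‖p - x τ‖ ^ 2 ≤ η * ⟪g (x τ), x τ - p⟫ := by nlinarith
      have h7 : (1 / η) * ‖p - x τ‖ ^ 2 ≤ ⟪g (x τ), x τ - p⟫ := by
        rw [one_div, inv_mul_le_iff₀ hηpos]
        exact h6
      linarith
    have h8 := descent (x τ) (hxK τ) p ((hproj u).1)
    rw [hβη] at h3
    rw [hp]
    nlinarith [sq_nonneg (‖p - x τ‖)]
  -- telescoping sum
  have hsum : ∑ τ ∈ Finset.range T, β / 2 * ‖x (τ + 1) - x τ‖ ^ 2 ≤ B := by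
    have htel : ∑ τ ∈ Finset.range T, (f (x τ) - f (x (τ + 1))) = f (x 0) - f (x T) :=
      Finset.sum_range_sub' (fun τ => f (x τ)) T
    calc ∑ τ ∈ Finset.range T, β / 2 * ‖x (τ + 1) - x τ‖ ^ 2
        ≤ ∑ τ ∈ Finset.range T, (f (x τ) - f (x (τ + 1))) :=
          Finset.sum_le_sum (fun τ _ => by linarith [hstep τ])
      _ = f (x 0) - f (x T) := htel
      _ ≤ B := by
          have h1 := hrange _ hx0
          have h2 := hrange _ (hxK T)
          linarith [h1.2, h2.1]
  have hTpos : (0:ℝ) < T := by exact_mod_cast hT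
  have hconst : ∑ _τ ∈ Finset.range T, (B / T) = B := by
    rw [Finset.sum_const, Finset.card_range, nsmul_eq_mul]
    field_simp
  obtain ⟨τ, hτmem, hle⟩ := Finset.exists_le_of_sum_le
    (Finset.nonempty_range_iff.mpr hT.ne')
    (le_of_le_of_eq hsum hconst.symm)
  refine ⟨τ, Finset.mem_range.mp hτmem, ?_⟩
  rw [← hiter τ, hβη]
  set D := ‖x (τ + 1) - x τ‖ with hD
  have hDnn : 0 ≤ D := norm_nonneg _
  have hsq : (β * D) ^ 2 ≤ 2 * β * B / T := by
    calc (β * D) ^ 2 = 2 * β * (β / 2 * D ^ 2) := by ring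
      _ ≤ 2 * β * (B / T) := by
          exact mul_le_mul_of_nonneg_left (by simpa using hle) (by positivity)
      _ = 2 * β * B / T := by ring
  calc β * D = Real.sqrt ((β * D) ^ 2) := (Real.sqrt_sq (by positivity)).symm
    _ ≤ Real.sqrt (2 * β * B / T) := Real.sqrt_le_sqrt hsq
end

section
/- Let K ⊆ ℝ^n be a nonempty closed convex set, β > 0, δ > 0, and let f : ℝ^n → ℝ be differentiable with ‖∇f(x) − ∇f(y)‖₂ ≤ β‖x − y‖₂ for all x, y ∈ K. Set η = 1/β, let x ∈ K, and let x⁺ = P_K(x − η∇f(x)). If ‖x⁺ − x‖₂ ≤ ηδ/2, then for every unit vector u of the form u = λ(z − x⁺) with z ∈ K and λ > 0 (i.e., every unit vector in the tangent cone cone(K − {x⁺})), one has uᵀ∇f(x⁺) ≥ −δ. -/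
open Matrix Finset RealInnerProductSpace

set_option maxHeartbeats 1000000

/-- a short projected-gradient step certifies approximate stationarity at
the new point (in the tangent cone sense). -/
theorem stmt_19 {n : ℕ} (K : Set (EuclideanSpace ℝ (Fin n)))
    (hKne : K.Nonempty) (hKcl : IsClosed K) (hKconv : Convex ℝ K)
    (β δ : ℝ) (hβ : 0 < β) (hδ : 0 < δ)
    (f : EuclideanSpace ℝ (Fin n) → ℝ) (g : EuclideanSpace ℝ (Fin n) → EuclideanSpace ℝ (Fin n))
    (hdiff : ∀ x, HasGradientAt f (g x) x)
    (hsmooth : ∀ x ∈ K, ∀ y ∈ K, ‖g x - g y‖ ≤ β * ‖x - y‖)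
    (η : ℝ) (hη : η = 1 / β)
    (x : EuclideanSpace ℝ (Fin n)) (hx : x ∈ K)
    (xplus : EuclideanSpace ℝ (Fin n)) (hxplusK : xplus ∈ K)
    (hxplusProj : ∀ z ∈ K, ‖xplus - (x - η • g x)‖ ≤ ‖z - (x - η • g x)‖)
    (hclose : ‖xplus - x‖ ≤ η * δ / 2) :
    ∀ (u z : EuclideanSpace ℝ (Fin n)) (lam : ℝ), z ∈ K → 0 < lam →
      u = lam • (z - xplus) → ‖u‖ = 1 → -δ ≤ ⟪u, g xplus⟫ := by
  set p := x - η • g x with hp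
  have hη0 : 0 < η := by rw [hη]; positivity
  haveI : Nonempty K := ⟨⟨xplus, hxplusK⟩⟩
  have hbdd : BddBelow (Set.range fun w : K => ‖p - (w : EuclideanSpace ℝ (Fin n))‖) :=
    ⟨0, fun _ ⟨_, h⟩ => h ▸ norm_nonneg _⟩
  have hinf : ‖p - xplus‖ = ⨅ w : K, ‖p - w‖ := by
    refine le_antisymm (le_ciInf fun w => ?_) (ciInf_le hbdd ⟨xplus, hxplusK⟩)
    rw [norm_sub_rev, norm_sub_rev p w]
    exact hxplusProj w w.2
  have key : ∀ z ∈ K, ⟪p - xplus, z - xplus⟫ ≤ 0 :=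
    (norm_eq_iInf_iff_real_inner_le_zero hKconv hxplusK).1 hinf
  intro u z lam hz hlam hu hnorm
  have hL : lam * ‖z - xplus‖ = 1 := by
    rw [hu, norm_smul, Real.norm_eq_abs, abs_of_pos hlam] at hnorm
    exact hnorm
  set L := ‖z - xplus‖ with hLdef
  have hLpos : 0 < L := by
    rcases lt_or_ge 0 L with h | h
    · exact h
    · exfalso; nlinarith [norm_nonneg (z - xplus)]
  set A := ⟪z - xplus, g x⟫ with hA
  set B := ⟪z - xplus, x - xplus⟫ with hB
  set C := ⟪z - xplus, g xplus - g x⟫ with hC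
  have hkey : B - η * A ≤ 0 := by
    have h0 := key z hz
    have hexp : ⟪p - xplus, z - xplus⟫ = B - η * A := by
      rw [hp, show x - η • g x - xplus = (x - xplus) - η • g x from by abel,
        inner_sub_left, real_inner_smul_left,
        real_inner_comm (z - xplus) (x - xplus), real_inner_comm (z - xplus) (g x)]
    linarith [hexp ▸ h0]
  have hCS1 : -(L * ‖x - xplus‖) ≤ B := by
    have h := abs_real_inner_le_norm (z - xplus) (x - xplus)
    rw [abs_le] at h; linarith [h.1]
  have hCS2 : -(L * ‖g xplus - g x‖) ≤ C := by
    have h := abs_real_inner_le_norm (z - xplus) (g xplus - g x)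
    rw [abs_le] at h; linarith [h.1]
  have hβη : β * η = 1 := by rw [hη]; field_simp
  have hsm : ‖g xplus - g x‖ ≤ δ / 2 := by
    have h1 := hsmooth xplus hxplusK x hx
    nlinarith
  have hxx : ‖x - xplus‖ ≤ η * δ / 2 := by rw [norm_sub_rev]; exact hclose
  have hgoal : ⟪u, g xplus⟫ = lam * (A + C) := by
    rw [hu, real_inner_smul_left]
    congr 1
    rw [hA, hC, ← inner_add_right]
    congr 1; abel
  rw [hgoal]
  have hnx : 0 ≤ ‖x - xplus‖ := norm_nonneg _
  have hB1 : -(η * δ / 2) ≤ lam * B := by nlinarith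
  have hA1 : -(δ / 2) ≤ lam * A := by
    have h2 : η * (-(δ / 2)) ≤ η * (lam * A) := by nlinarith
    exact le_of_mul_le_mul_left h2 hη0
  have hC1 : -(δ / 2) ≤ lam * C := by
    have : -(L * (δ / 2)) ≤ C := by nlinarith [norm_nonneg (g xplus - g x)]
    nlinarith
  nlinarith
end
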